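/- Let V₁ : Matrix (Fin a) (Fin m) ℝ and V₂, W₁, W₂ : Matrix (Fin m) (Fin m) ℝ, and define φ(W) = V₁ * W * V₂ * W * V₁ᵀ. Suppose V₂ is positive semidefinite, W₁ and W₂ are symmetric, and λ ∈ [0,1]. Then φ is psd-convex along the segment: the matrix λ • φ(W₁) + (1-λ) • φ(W₂) - φ(λ • W₁ + (1-λ) • W₂) is positive semidefinite. -/

import Mathlib

open Matrix

/-- if `V₂` is positive semidefinite and `W₁, W₂` are symmetric, the mapping
`φ(W) = V₁ W V₂ W V₁ᵀ` is psd-convex along the segment from `W₂` to `W₁`: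
`λφ(W₁) + (1-λ)φ(W₂) - φ(λW₁+(1-λ)W₂)` is positive semidefinite for `λ ∈ [0,1]`. -/
theorem phi_psd_convex_on_segment
    (a m : ℕ) (V₁ : Matrix (Fin a) (Fin m) ℝ)
    (V₂ W₁ W₂ : Matrix (Fin m) (Fin m) ℝ)
    (hV₂ : V₂.PosSemidef) (hW₁ : W₁.IsSymm) (hW₂ : W₂.IsSymm)
    (φ : Matrix (Fin m) (Fin m) ℝ → Matrix (Fin a) (Fin a) ℝ)
    (hφ : ∀ W, φ W = V₁ * W * V₂ * W * V₁ᵀ)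
    (l : ℝ) (hl0 : 0 ≤ l) (hl1 : l ≤ 1) :
    (l • φ W₁ + (1 - l) • φ W₂ - φ (l • W₁ + (1 - l) • W₂)).PosSemidef := by
  obtain ⟨B, hB⟩ : ∃ B : Matrix (Fin m) (Fin m) ℝ, V₂ = Bᴴ * B := by
    letI := Matrix.instStarOrderedRing (n := Fin m) (𝕜 := ℝ)
    open scoped MatrixOrder in
    exact CStarAlgebra.nonneg_iff_eq_star_mul_self.mp hV₂.nonneg
  set c := Real.sqrt (l * (1 - l)) with hc
  have hcc : c * c = l * (1 - l) := Real.mul_self_sqrt (by nlinarith)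
  have key : (l • φ W₁ + (1 - l) • φ W₂ - φ (l • W₁ + (1 - l) • W₂))
      = (c • (V₁ * (W₁ - W₂) * Bᴴ)) * (c • (V₁ * (W₁ - W₂) * Bᴴ))ᴴ := by
    have hV₁ : V₁ᵀ = V₁ᴴ := rfl
    have h1 : W₁ᴴ = W₁ := hW₁.eq
    have h2 : W₂ᴴ = W₂ := hW₂.eq
    simp only [hφ, hB, conjTranspose_smul, conjTranspose_mul, conjTranspose_conjTranspose,
      conjTranspose_sub, h1, h2, ← hV₁, star_trivial,
      Matrix.smul_mul, Matrix.mul_smul, smul_smul, hcc, smul_sub, sub_smul,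
      Matrix.mul_sub, Matrix.sub_mul, Matrix.mul_add, Matrix.add_mul, Matrix.mul_assoc]
    module
  rw [key]
  exact posSemidef_self_mul_conjTranspose _
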